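/- For every finite connected simple graph G with at least two vertices, the number of vertices of G of degree at least 3 is at most 12·ml(G) + 32. -/

import Mathlib

open SimpleGraph

variable {V : Type*}

/-- The number of leaves (degree-1 vertices) of a graph. -/
noncomputable def numLeaves (T : SimpleGraph V) : ℕ :=
  {v | (T.neighborSet v).ncard = 1}.ncard

/-- The max-leaf number of `G`: the maximum number of leaves over all spanning trees of `G`
(a spanning tree is a subgraph of `G` on the full vertex set that is a tree). -/
noncomputable def ml (G : SimpleGraph V) : ℕ :=
  sSup {n | ∃ T : SimpleGraph V, T ≤ G ∧ T.IsTree ∧ n = numLeaves T}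

namespace MLAux

abbrev delE (T : SimpleGraph V) (a b : V) : SimpleGraph V :=
  T \ fromEdgeSet {s(a, b)}

lemma reachable_sup_edge_aux {H : SimpleGraph V} {u v x y : V}
    (w : (H ⊔ edge u v).Walk x y) :
    H.Reachable x y ∨ (H.Reachable x u ∧ H.Reachable v y) ∨
      (H.Reachable x v ∧ H.Reachable u y) := by
  induction w with
  | nil => exact Or.inl (Reachable.refl _)
  | @cons a b c hab p ih =>
    rcases hab with hab | hab
    · rcases ih with h | ⟨h1, h2⟩ | ⟨h1, h2⟩
      · exact Or.inl (hab.reachable.trans h)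
      · exact Or.inr (Or.inl ⟨hab.reachable.trans h1, h2⟩)
      · exact Or.inr (Or.inr ⟨hab.reachable.trans h1, h2⟩)
    · rw [edge_adj] at hab
      obtain ⟨⟨rfl, rfl⟩ | ⟨rfl, rfl⟩, hne⟩ := hab
      · rcases ih with h | ⟨h1, h2⟩ | ⟨h1, h2⟩
        · exact Or.inr (Or.inl ⟨Reachable.refl _, h⟩)
        · exact Or.inl (h1.symm.trans h2)
        · exact Or.inl h2
      · rcases ih with h | ⟨h1, h2⟩ | ⟨h1, h2⟩
        · exact Or.inr (Or.inr ⟨Reachable.refl _, h⟩)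
        · exact Or.inl h2
        · exact Or.inl (h1.symm.trans h2)


lemma reachable_sup_edge {H : SimpleGraph V} {u v x y : V}
    (h : (H ⊔ edge u v).Reachable x y) :
    H.Reachable x y ∨ (H.Reachable x u ∧ H.Reachable v y) ∨
      (H.Reachable x v ∧ H.Reachable u y) :=
  h.elim fun w => reachable_sup_edge_aux w


lemma delE_adj {T : SimpleGraph V} {a b x y : V} :
    (delE T a b).Adj x y ↔ T.Adj x y ∧ ¬(s(x, y) = s(a, b)) := by
  simp only [delE, sdiff_adj, fromEdgeSet_adj, Set.mem_singleton_iff]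
  constructor
  · rintro ⟨h1, h2⟩
    exact ⟨h1, fun h => h2 ⟨h, h1.ne⟩⟩
  · rintro ⟨h1, h2⟩
    exact ⟨h1, fun h => h2 h.1⟩


lemma delE_sup_edge {T : SimpleGraph V} {a b : V} (hab : T.Adj a b) :
    delE T a b ⊔ edge a b = T := by
  ext x y
  simp only [sup_adj, delE_adj, edge_adj]
  constructor
  · rintro (⟨h, -⟩ | ⟨⟨rfl, rfl⟩ | ⟨rfl, rfl⟩, -⟩)
    · exact h
    · exact hab
    · exact hab.symm
  · intro h
    by_cases he : s(x, y) = s(a, b)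
    · rw [Sym2.eq_iff] at he
      rcases he with ⟨rfl, rfl⟩ | ⟨rfl, rfl⟩
      · exact Or.inr ⟨Or.inl ⟨rfl, rfl⟩, h.ne⟩
      · exact Or.inr ⟨Or.inr ⟨rfl, rfl⟩, h.ne⟩
    · exact Or.inl ⟨h, he⟩


lemma reach_delE_or {T : SimpleGraph V} {a b x : V} (hab : T.Adj a b)
    (h : T.Reachable x a) :
    (delE T a b).Reachable x a ∨ (delE T a b).Reachable x b := by
  rw [← delE_sup_edge hab] at h
  rcases reachable_sup_edge h with h | ⟨h1, h2⟩ | ⟨h1, h2⟩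
  · exact Or.inl h
  · exact Or.inl h1
  · exact Or.inr h1


lemma reach_of_sup_edge {H : SimpleGraph V} {u v x y : V} (huv : H.Reachable u v)
    (h : (H ⊔ edge u v).Reachable x y) : H.Reachable x y := by
  rcases reachable_sup_edge h with h | ⟨h1, h2⟩ | ⟨h1, h2⟩
  · exact h
  · exact (h1.trans huv).trans h2
  · exact (h1.trans huv.symm).trans h2


lemma exists_spanning_tree_aux [Fintype V] (n : ℕ) :
    ∀ G : SimpleGraph V, G.edgeSet.ncard = n → G.Connected → ∃ T ≤ G, T.IsTree := by
  induction n using Nat.strong_induction_on with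
  | _ n ih =>
    intro G hcard hconn
    by_cases hac : G.IsAcyclic
    · exact ⟨G, le_refl G, ⟨hconn, hac⟩⟩
    · rw [isAcyclic_iff_forall_adj_isBridge] at hac
      push_neg at hac
      obtain ⟨a, b, hab, hbr⟩ := hac
      rw [isBridge_iff] at hbr
      push_neg at hbr
      have hreach : (delE G a b).Reachable a b := hbr
      have hconn' : (delE G a b).Connected := by
        rw [connected_iff]
        refine ⟨fun x y => ?_, hconn.nonempty⟩
        have := hconn.preconnected x y
        rw [← delE_sup_edge hab] at this
        exact reach_of_sup_edge hreach this
      have hlt : (delE G a b).edgeSet.ncard < n := by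
        have hsub : (delE G a b).edgeSet = G.edgeSet \ {s(a, b)} := by
          rw [delE, edgeSet_sdiff, edgeSet_fromEdgeSet]
          ext e
          simp only [Set.mem_diff, Set.mem_singleton_iff]
          constructor
          · rintro ⟨h1, h2⟩
            refine ⟨h1, fun h => h2 ⟨h, ?_⟩⟩
            rw [h]; simp [hab.ne]
          · rintro ⟨h1, h2⟩
            exact ⟨h1, fun h => h2 h.1⟩
        rw [hsub, ← hcard]
        have hfin : G.edgeSet.Finite := G.edgeSet.toFinite
        apply Set.ncard_lt_ncard _ hfin
        constructor
        · exact Set.diff_subset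
        · intro hsub
          have := hsub ((mem_edgeSet G).2 hab)
          simp at this
      obtain ⟨T, hT, htree⟩ := ih _ hlt (delE G a b) rfl hconn'
      exact ⟨T, le_trans hT sdiff_le, htree⟩


lemma exists_spanning_tree [Fintype V] (G : SimpleGraph V) (hconn : G.Connected) :
    ∃ T ≤ G, T.IsTree :=
  exists_spanning_tree_aux _ G rfl hconn


lemma edge_sdiff_ne {u v x y : V} (h : s(x, y) ≠ s(u, v)) :
    (edge u v : SimpleGraph V) \ fromEdgeSet {s(x, y)} = edge u v := by
  ext p q
  simp only [sdiff_adj, fromEdgeSet_adj, Set.mem_singleton_iff, edge_adj]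
  constructor
  · rintro ⟨h1, -⟩; exact h1
  · rintro ⟨h1, h2⟩
    refine ⟨⟨h1, h2⟩, ?_⟩
    rintro ⟨heq, -⟩
    apply h
    rw [← heq]
    rcases h1 with ⟨rfl, rfl⟩ | ⟨rfl, rfl⟩
    · rfl
    · exact Sym2.eq_swap


lemma swap_isTree {T : SimpleGraph V} (htree : T.IsTree) {a b u v : V}
    (hab : T.Adj a b) (huv : u ≠ v) (huvT : ¬T.Adj u v)
    (hsep : ¬(delE T a b).Reachable u v) :
    (delE T a b ⊔ edge u v).IsTree := by
  set H := delE T a b with hH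
  have hHle : H ≤ T := sdiff_le
  have hbridges := (isAcyclic_iff_forall_adj_isBridge).mp htree.2
  have huvadj : (edge u v : SimpleGraph V).Adj u v := by
    rw [edge_adj]; exact ⟨Or.inl ⟨rfl, rfl⟩, huv⟩
  -- u and v reach a, b respectively (wlog)
  have hor : ∀ x : V, H.Reachable x a ∨ H.Reachable x b := fun x =>
    reach_delE_or hab (htree.1.preconnected x a)
  have huvr : (H ⊔ edge u v).Reachable u v := Adj.reachable (Or.inr huvadj)
  have hab' : (H ⊔ edge u v).Reachable a b := by
    rcases hor u with hu | hu <;> rcases hor v with hv | hv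
    · exact absurd (hu.trans hv.symm) hsep
    · exact ((hu.mono le_sup_left).symm.trans huvr).trans (hv.mono le_sup_left)
    · exact ((hv.mono le_sup_left).symm.trans huvr.symm).trans
        (hu.mono le_sup_left)
    · exact absurd (hu.trans hv.symm) hsep
  have hreacha : ∀ x : V, (H ⊔ edge u v).Reachable x a := by
    intro x
    rcases hor x with hx | hx
    · exact hx.mono le_sup_left
    · exact (hx.mono le_sup_left).trans hab'.symm
  constructor
  · -- connected
    rw [connected_iff]
    exact ⟨fun x y => (hreacha x).trans (hreacha y).symm, ⟨a⟩⟩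
  · -- acyclic
    rw [isAcyclic_iff_forall_adj_isBridge]
    intro x y hadj
    rcases hadj with hxy | hxy
    · -- an old edge
      have hxyT : T.Adj x y := hHle hxy
      have hne : s(x, y) ≠ s(u, v) := by
        intro heq
        rw [Sym2.eq_iff] at heq
        rcases heq with ⟨rfl, rfl⟩ | ⟨rfl, rfl⟩
        · exact huvT hxyT
        · exact huvT hxyT.symm
      change ¬((H ⊔ edge u v) \ fromEdgeSet {s(x, y)}).Reachable x y
      intro hreach
      rw [sup_sdiff, edge_sdiff_ne hne] at hreach
      rcases reachable_sup_edge hreach with h | ⟨h1, h2⟩ | ⟨h1, h2⟩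
      · -- x reaches y in H minus xy: contradicts bridge in T
        have hb := hbridges hxyT
        rw [isBridge_iff] at hb
        exact hb (h.mono (sdiff_le_sdiff_right hHle))
      · -- u,v connected in H: contra hsep
        exact hsep (((h1.mono sdiff_le).symm.trans hxy.reachable).trans
          (h2.mono sdiff_le).symm)
      · exact hsep (((h2.mono sdiff_le).trans hxy.reachable.symm).trans
          (h1.mono sdiff_le))
    · -- the new edge
      rw [edge_adj] at hxy
      obtain ⟨hc, hne⟩ := hxy
      have base : ¬((H ⊔ edge u v) \ fromEdgeSet {s(u, v)}).Reachable u v := by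
        rw [sup_sdiff]
        have : (edge u v : SimpleGraph V) \ fromEdgeSet {s(u, v)} = ⊥ := by
          rw [edge]; exact sdiff_self
        rw [this, sup_bot_eq]
        intro hr
        exact hsep (hr.mono sdiff_le)
      have bridge_uv : (H ⊔ edge u v).IsBridge s(u, v) :=
        (isBridge_iff).2 base
      rcases hc with ⟨heq1, heq2⟩ | ⟨heq1, heq2⟩
      · rw [heq1, heq2]; exact bridge_uv
      · have : s(x, y) = s(u, v) := by rw [heq1, heq2, Sym2.eq_swap]
        rw [this]; exact bridge_uv


lemma swap_adj {T : SimpleGraph V} {a b u v x y : V} (huv : u ≠ v) :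
    (delE T a b ⊔ edge u v).Adj x y ↔
      (T.Adj x y ∧ ¬((x = a ∧ y = b) ∨ (x = b ∧ y = a))) ∨
        ((x = u ∧ y = v) ∨ (x = v ∧ y = u)) := by
  simp only [sup_adj, sdiff_adj, fromEdgeSet_adj, Set.mem_singleton_iff, edge_adj,
    Sym2.eq_iff]
  constructor
  · rintro (⟨h1, h2⟩ | ⟨h, hne⟩)
    · exact Or.inl ⟨h1, fun hh => h2 ⟨hh, h1.ne⟩⟩
    · exact Or.inr h
  · rintro (⟨h1, h2⟩ | h)
    · exact Or.inl ⟨h1, fun hh => h2 hh.1⟩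
    · refine Or.inr ⟨h, ?_⟩
      rcases h with ⟨rfl, rfl⟩ | ⟨rfl, rfl⟩
      · exact huv
      · exact fun hh => huv hh.symm


lemma swap_nbr_unchanged {T : SimpleGraph V} {a b u v w : V} (huv : u ≠ v)
    (hwa : w ≠ a) (hwb : w ≠ b) (hwu : w ≠ u) (hwv : w ≠ v) :
    (delE T a b ⊔ edge u v).neighborSet w = T.neighborSet w := by
  ext x
  simp only [mem_neighborSet, swap_adj huv]
  tauto


lemma swap_nbr_a {T : SimpleGraph V} {a b u v : V} (huv : u ≠ v)
    (hau : a ≠ u) (hav : a ≠ v) (hab : a ≠ b) :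
    (delE T a b ⊔ edge u v).neighborSet a = T.neighborSet a \ {b} := by
  ext x
  simp only [mem_neighborSet, swap_adj huv, Set.mem_diff, Set.mem_singleton_iff]
  tauto


lemma swap_nbr_u {T : SimpleGraph V} {a b u v : V} (huv : u ≠ v)
    (hua : u ≠ a) (hub : u ≠ b) :
    (delE T a b ⊔ edge u v).neighborSet u = T.neighborSet u ∪ {v} := by
  ext x
  simp only [mem_neighborSet, swap_adj huv, Set.mem_union, Set.mem_singleton_iff]
  tauto


lemma swap_nbr_mid {T : SimpleGraph V} {a b v : V} (hvb : v ≠ b) (hva : v ≠ a)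
    (hab : a ≠ b) :
    (delE T v a ⊔ edge v b).neighborSet v = (T.neighborSet v \ {a}) ∪ {b} := by
  ext x
  simp only [mem_neighborSet, swap_adj hvb, Set.mem_union, Set.mem_diff,
    Set.mem_singleton_iff]
  tauto


lemma delE_comm (T : SimpleGraph V) (a b : V) : delE T a b = delE T b a := by
  rw [delE, delE, Sym2.eq_swap]


lemma long_swap_leaves [Fintype V] {T : SimpleGraph V} {a b u v : V}
    (huv : u ≠ v) (hau : a ≠ u) (hav : a ≠ v) (hbu : b ≠ u) (hbv : b ≠ v)
    (hab : a ≠ b) (hTab : T.Adj a b)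
    (hda : (T.neighborSet a).ncard = 2) (hdb : (T.neighborSet b).ncard = 2)
    (hdv : (T.neighborSet v).ncard = 2) :
    numLeaves T + 1 ≤ numLeaves (delE T a b ⊔ edge u v) := by
  classical
  set T' := delE T a b ⊔ edge u v with hT'
  set S := {w | (T.neighborSet w).ncard = 1} with hS
  set S' := {w | (T'.neighborSet w).ncard = 1} with hS'
  have hSa : a ∉ S := by simp only [hS, Set.mem_setOf_eq, hda]; omega
  have hSb : b ∉ S := by simp only [hS, Set.mem_setOf_eq, hdb]; omega
  have hS'a : a ∈ S' := by
    have := swap_nbr_a (T := T) huv hau hav hab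
    simp only [hS', Set.mem_setOf_eq, hT', this]
    rw [Set.ncard_diff_singleton_of_mem (s := T.neighborSet a) ((T.mem_neighborSet a b).2 hTab), hda]
  have hS'b : b ∈ S' := by
    have heq : delE T a b ⊔ edge u v = delE T b a ⊔ edge u v := by
      rw [delE_comm]
    have := swap_nbr_a (T := T) (a := b) (b := a) huv hbu hbv (Ne.symm hab)
    simp only [hS', Set.mem_setOf_eq, hT', heq, this]
    rw [Set.ncard_diff_singleton_of_mem (s := T.neighborSet b) ((T.mem_neighborSet b a).2 hTab.symm), hdb]
  have hsub : (S \ {u}) ∪ {a, b} ⊆ S' := by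
    rintro w (⟨hwS, hwu⟩ | hw)
    · have hw1 : (T.neighborSet w).ncard = 1 := hwS
      have hwa : w ≠ a := fun h => hSa (h ▸ hwS)
      have hwb : w ≠ b := fun h => hSb (h ▸ hwS)
      have hwv : w ≠ v := by rintro rfl; rw [hdv] at hw1; omega
      have hwu' : w ≠ u := by simpa using hwu
      simp only [hS', Set.mem_setOf_eq, hT',
        swap_nbr_unchanged huv hwa hwb hwu' hwv]
      exact hw1
    · rcases hw with rfl | hw
      · exact hS'a
      · rcases hw with rfl
        exact hS'b
  have hdisj : Disjoint (S \ {u}) {a, b} := by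
    rw [Set.disjoint_right]
    rintro w (rfl | hw) hmem
    · exact hSa hmem.1
    · rcases hw with rfl
      exact hSb hmem.1
  have hcard1 : ((S \ {u}) ∪ {a, b}).ncard = (S \ {u}).ncard + 2 := by
    rw [Set.ncard_union_eq hdisj (Set.toFinite _) (Set.toFinite _),
      Set.ncard_pair hab]
  have hcard2 : S.ncard ≤ (S \ {u}).ncard + 1 := by
    calc S.ncard ≤ (insert u (S \ {u})).ncard :=
          Set.ncard_le_ncard (fun x hx => by
            by_cases hxu : x = u
            · exact hxu ▸ Set.mem_insert _ _
            · exact Set.mem_insert_of_mem _ ⟨hx, hxu⟩) (Set.toFinite _)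
      _ ≤ (S \ {u}).ncard + 1 := Set.ncard_insert_le _ _
  calc numLeaves T + 1 = S.ncard + 1 := rfl
    _ ≤ (S \ {u}).ncard + 2 := by omega
    _ = ((S \ {u}) ∪ {a, b}).ncard := hcard1.symm
    _ ≤ S'.ncard := Set.ncard_le_ncard hsub (Set.toFinite _)
    _ = numLeaves T' := rfl


lemma short_swap_leaves [Fintype V] {T : SimpleGraph V} {v a b : V}
    (hva : T.Adj v a) (hab : a ≠ b) (hvb : v ≠ b)
    (hda : (T.neighborSet a).ncard = 2) (hdb : (T.neighborSet b).ncard = 2)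
    (hdv : (T.neighborSet v).ncard = 2) :
    numLeaves T + 1 ≤ numLeaves (delE T v a ⊔ edge v b) := by
  classical
  set T' := delE T v a ⊔ edge v b with hT'
  set S := {w | (T.neighborSet w).ncard = 1} with hS
  set S' := {w | (T'.neighborSet w).ncard = 1} with hS'
  have hSa : a ∉ S := by simp only [hS, Set.mem_setOf_eq, hda]; omega
  have hS'a : a ∈ S' := by
    have heq : delE T v a ⊔ edge v b = delE T a v ⊔ edge v b := by rw [delE_comm]
    have := swap_nbr_a (T := T) (a := a) (b := v) (u := v) (v := b) hvb
      hva.ne' hab hva.ne'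
    simp only [hS', Set.mem_setOf_eq, hT', heq, this]
    rw [Set.ncard_diff_singleton_of_mem (s := T.neighborSet a) ((T.mem_neighborSet a v).2 hva.symm), hda]
  have hsub : insert a S ⊆ S' := by
    rintro w hw
    rcases Set.mem_insert_iff.mp hw with rfl | hwS
    · exact hS'a
    · have hw1 : (T.neighborSet w).ncard = 1 := hwS
      have hwa : w ≠ a := fun h => hSa (h ▸ hwS)
      have hwb : w ≠ b := by rintro rfl; rw [hdb] at hw1; omega
      have hwv : w ≠ v := by rintro rfl; rw [hdv] at hw1; omega
      simp only [hS', Set.mem_setOf_eq, hT',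
        swap_nbr_unchanged hvb hwv hwa hwv hwb]
      exact hw1
  calc numLeaves T + 1 = S.ncard + 1 := rfl
    _ = (insert a S).ncard := (Set.ncard_insert_of_notMem hSa (Set.toFinite _)).symm
    _ ≤ S'.ncard := Set.ncard_le_ncard hsub (Set.toFinite _)
    _ = numLeaves T' := rfl


lemma edges_mapLe {G G' : SimpleGraph V} (h : G ≤ G') {u v : V} (p : G.Walk u v) :
    (p.mapLe h).edges = p.edges := by
  rw [Walk.mapLe, Walk.edges_map]
  have : Sym2.map (Hom.ofLE h) = id := by
    funext e
    refine Sym2.ind (fun x y => ?_) e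
    simp [Hom.ofLE_apply]
  rw [this, List.map_id]


lemma tree_bridge {T : SimpleGraph V} (htree : T.IsTree) {x y : V} (hxy : T.Adj x y) :
    ¬(delE T x y).Reachable x y :=
  ((isAcyclic_iff_forall_adj_isBridge).1 htree.2 hxy)


lemma delE_not_adj {T : SimpleGraph V} {x y : V} : ¬(delE T x y).Adj x y := by
  rintro ⟨h1, h2⟩
  exact h2 ((fromEdgeSet_adj _).2 ⟨Set.mem_singleton _, h1.ne⟩)


lemma no_both {T : SimpleGraph V} (htree : T.IsTree) {v u a b a' b' : V}
    (hNv : T.neighborSet v = {a, b}) (hNa : T.neighborSet a = {v, a'})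
    (hNb : T.neighborSet b = {v, b'})
    (hvu : v ≠ u) (hua : u ≠ a) (hub : u ≠ b)
    (h1 : (delE T a a').Reachable u v) (h2 : (delE T b b').Reachable u v) : False := by
  classical
  obtain ⟨w1⟩ := h1
  obtain ⟨w2⟩ := h2
  set p1 : (delE T a a').Walk u v := (w1.toPath : (delE T a a').Walk u v) with hp1
  set p2 : (delE T b b').Walk u v := (w2.toPath : (delE T b b').Walk u v) with hp2
  have hp1path : p1.IsPath := w1.toPath.2
  have hp2path : p2.IsPath := w2.toPath.2
  set P1 : T.Walk u v := p1.mapLe sdiff_le with hP1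
  set P2 : T.Walk u v := p2.mapLe sdiff_le with hP2
  have hP1path : P1.IsPath := hp1path.mapLe _
  have hP2path : P2.IsPath := hp2path.mapLe _
  have hP1e : s(a, a') ∉ P1.edges := by
    rw [hP1, edges_mapLe]
    intro hmem
    have := p1.edges_subset_edgeSet hmem
    rw [mem_edgeSet] at this
    exact delE_not_adj this
  have hP2e : s(b, b') ∉ P2.edges := by
    rw [hP2, edges_mapLe]
    intro hmem
    have := p2.edges_subset_edgeSet hmem
    rw [mem_edgeSet] at this
    exact delE_not_adj this
  obtain ⟨R, -, huniq⟩ := htree.existsUnique_path u v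
  have hEq : P1 = P2 := (huniq P1 hP1path).trans (huniq P2 hP2path).symm
  -- now analyze the reverse of P1
  have hrevpath : P1.reverse.IsPath := hP1path.reverse
  obtain ⟨x, hvx, q, hq⟩ := Walk.exists_eq_cons_of_ne hvu P1.reverse
  have hxmem : x ∈ T.neighborSet v := hvx
  rw [hNv] at hxmem
  have hqpath : (Walk.cons hvx q).IsPath := hq ▸ hrevpath
  have hvq : v ∉ q.support := by
    have := hqpath.support_nodup
    simp only [Walk.support_cons, List.nodup_cons] at this
    exact this.1
  -- helper to finish in each symmetric case
  have finish : ∀ (c c' : V) (hxc : x = c) (hNc : T.neighborSet c = {v, c'})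
      (huc : u ≠ c), s(c, c') ∈ P1.edges := by
    intro c c' hxc hNc huc
    subst hxc
    cases q with
    | nil => exact absurd rfl huc.symm
    | @cons _ y _ hcy q' =>
      have hymem : y ∈ T.neighborSet x := hcy
      rw [hNc] at hymem
      have hyne : y ≠ v := by
        intro h
        apply hvq
        rw [Walk.support_cons]
        exact List.mem_cons_of_mem _ (h ▸ q'.start_mem_support)
      have hyc' : y = c' := by
        rcases hymem with h | h
        · exact absurd h hyne
        · exact h
      subst hyc'
      have : s(x, y) ∈ P1.reverse.edges := by
        rw [hq]
        simp [Walk.edges_cons]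
      rw [Walk.edges_reverse, List.mem_reverse] at this
      exact this
  rcases hxmem with hxa | hxb
  · exact hP1e (finish a a' hxa hNa hua)
  · have : s(b, b') ∈ P2.edges := hEq ▸ finish b b' hxb hNb hub
    exact hP2e this


lemma edge_le {G : SimpleGraph V} {u v : V} (h : G.Adj u v) : edge u v ≤ G := by
  intro x y hxy
  rw [edge_adj] at hxy
  rcases hxy with ⟨⟨rfl, rfl⟩ | ⟨rfl, rfl⟩, -⟩
  · exact h
  · exact h.symm


lemma nbr_pair {T : SimpleGraph V} {a v : V} (h : (T.neighborSet a).ncard = 2)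
    (hav : T.Adj a v) : ∃ c, c ≠ v ∧ T.Adj a c ∧ T.neighborSet a = {v, c} := by
  rw [Set.ncard_eq_two] at h
  obtain ⟨x, y, hxy, hset⟩ := h
  have hv : v ∈ T.neighborSet a := hav
  rw [hset] at hv
  rcases hv with rfl | rfl
  · refine ⟨y, hxy.symm, ?_, hset⟩
    have : y ∈ T.neighborSet a := by rw [hset]; exact Or.inr rfl
    exact this
  · refine ⟨x, hxy, ?_, by rw [hset, Set.pair_comm]⟩
    have : x ∈ T.neighborSet a := by rw [hset]; exact Or.inl rfl
    exact this


section Main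

variable [Fintype V] {G T : SimpleGraph V} (hTG : T ≤ G) (htree : T.IsTree)
  (hmax : ∀ T' : SimpleGraph V, T' ≤ G → T'.IsTree → numLeaves T' ≤ numLeaves T)

include hTG htree hmax in
/-- no short swap improvement: an edge `v-a`, with `a` adjacent to `c`, `v` not `T`-adjacent
to `c` but `G`-adjacent, all of degree 2, is impossible. -/

lemma no_short {v a c : V} (h1 : T.Adj v a) (h2 : T.Adj a c) (h3 : ¬T.Adj v c)
    (h4 : G.Adj v c)
    (hda : (T.neighborSet a).ncard = 2) (hdc : (T.neighborSet c).ncard = 2)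
    (hdv : (T.neighborSet v).ncard = 2) : False := by
  have hvc : v ≠ c := h4.ne
  have hsep : ¬(delE T v a).Reachable v c := by
    intro hr
    apply tree_bridge htree h1
    refine hr.trans (Adj.reachable ?_)
    rw [sdiff_adj]
    refine ⟨h2.symm, ?_⟩
    rw [fromEdgeSet_adj]
    rintro ⟨hmem, -⟩
    rw [Set.mem_singleton_iff, Sym2.eq_iff] at hmem
    rcases hmem with ⟨rfl, -⟩ | ⟨rfl, rfl⟩
    · exact hvc rfl
    · exact h3 h1
  have htree' := swap_isTree htree h1 hvc h3 hsep
  have hle : delE T v a ⊔ edge v c ≤ G := sup_le (sdiff_le.trans hTG) (edge_le h4)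
  have := short_swap_leaves h1 h2.ne hvc hda hdc hdv
  have := hmax _ hle htree'
  omega

include hTG htree hmax in
/-- no long swap improvement -/

lemma no_long {a c u v : V} (hac : T.Adj a c) (hGvu : G.Adj v u) (hTvu : ¬T.Adj v u)
    (hsep : ¬(delE T a c).Reachable u v)
    (hau : a ≠ u) (hav : a ≠ v) (hcu : c ≠ u) (hcv : c ≠ v)
    (hda : (T.neighborSet a).ncard = 2) (hdc : (T.neighborSet c).ncard = 2)
    (hdv : (T.neighborSet v).ncard = 2) : False := by
  have huv : u ≠ v := hGvu.ne'
  have htree' := swap_isTree htree hac huv (fun h => hTvu h.symm) hsep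
  have hle : delE T a c ⊔ edge u v ≤ G := sup_le (sdiff_le.trans hTG) (edge_le hGvu.symm)
  have := long_swap_leaves huv hau hav hcu hcv hac.ne hac hda hdc hdv
  have := hmax _ hle htree'
  omega

include hTG htree hmax in

lemma claimA {v u : V} (hGvu : G.Adj v u) (hTvu : ¬T.Adj v u)
    (hdv : (T.neighborSet v).ncard = 2) :
    ∃ w, (T.neighborSet w).ncard ≠ 2 ∧ (T.Adj v w ∨
      ∃ x, (T.neighborSet x).ncard = 2 ∧ T.Adj v x ∧ T.Adj x w) := by
  by_contra hcon
  push_neg at hcon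
  -- all relevant vertices have degree 2
  have hdeg : ∀ w, (T.Adj v w ∨ ∃ x, (T.neighborSet x).ncard = 2 ∧ T.Adj v x ∧ T.Adj x w) →
      (T.neighborSet w).ncard = 2 := by
    intro w hw
    by_contra hne
    obtain ⟨hc1, hc2⟩ := hcon w hne
    rcases hw with hw | ⟨x, hx1, hx2, hx3⟩
    · exact hc1 hw
    · exact hc2 x hx1 hx2 hx3
  -- extract the two neighbors of v
  obtain ⟨a, b, hab, hNv⟩ := Set.ncard_eq_two.mp hdv
  have hva : T.Adj v a := by
    have : a ∈ T.neighborSet v := by rw [hNv]; exact Or.inl rfl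
    exact this
  have hvb : T.Adj v b := by
    have : b ∈ T.neighborSet v := by rw [hNv]; exact Or.inr rfl
    exact this
  have hda : (T.neighborSet a).ncard = 2 := hdeg a (Or.inl hva)
  have hdb : (T.neighborSet b).ncard = 2 := hdeg b (Or.inl hvb)
  obtain ⟨a', ha'v, haa', hNa⟩ := nbr_pair hda hva.symm
  obtain ⟨b', hb'v, hbb', hNb⟩ := nbr_pair hdb hvb.symm
  have hda' : (T.neighborSet a').ncard = 2 := hdeg a' (Or.inr ⟨a, hda, hva, haa'⟩)
  have hdb' : (T.neighborSet b').ncard = 2 := hdeg b' (Or.inr ⟨b, hdb, hvb, hbb'⟩)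
  -- basic distinctness
  have hvu : v ≠ u := hGvu.ne
  have hua : u ≠ a := by rintro rfl; exact hTvu hva
  have hub : u ≠ b := by rintro rfl; exact hTvu hvb
  -- case analysis on u
  by_cases huA : u = a'
  · subst huA
    exact no_short hTG htree hmax hva haa' hTvu hGvu hda hda' hdv
  by_cases huB : u = b'
  · subst huB
    exact no_short hTG htree hmax hvb hbb' hTvu hGvu hdb hdb' hdv
  -- u is far away
  by_cases hr1 : (delE T a a').Reachable u v
  · by_cases hr2 : (delE T b b').Reachable u v
    · exact no_both htree hNv hNa hNb hvu hua hub hr1 hr2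
    · -- swap on edge (b,b')
      refine no_long hTG htree hmax hbb' hGvu hTvu hr2 (fun h => hub h.symm)
        hvb.ne' (fun h => huB h.symm) hb'v ?_ ?_ ?_
      · exact hdb
      · exact hdb'
      · exact hdv
  · refine no_long hTG htree hmax haa' hGvu hTvu hr1 (fun h => hua h.symm)
      hva.ne' (fun h => huA h.symm) ha'v ?_ ?_ ?_
    · exact hda
    · exact hda'
    · exact hdv


end Main


section Main2
open Finset
variable [Fintype V] {G T : SimpleGraph V}

lemma main_count (hTG : T ≤ G) (htree : T.IsTree)
    (hmax : ∀ T' : SimpleGraph V, T' ≤ G → T'.IsTree → numLeaves T' ≤ numLeaves T)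
    (h2 : 1 < Fintype.card V) :
    {v | 3 ≤ (G.neighborSet v).ncard}.ncard ≤ 12 * numLeaves T + 32 := by
  classical
  set n := Fintype.card V with hn
  have hdd : ∀ w, (T.neighborSet w).ncard = T.degree w := by
    intro w
    rw [← T.card_neighborFinset_eq_degree w, neighborFinset_def,
      Set.ncard_eq_toFinset_card']
  have hd1 : ∀ w, 1 ≤ T.degree w := by
    intro w
    obtain ⟨u, hu⟩ := Fintype.exists_ne_of_one_lt_card h2 w
    rw [Nat.succ_le_iff, degree_pos_iff_exists_adj]
    obtain ⟨p⟩ := htree.1.preconnected w u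
    cases p with
    | nil => exact absurd rfl hu
    | cons h _ => exact ⟨_, h⟩
  set A1 := univ.filter (fun w => T.degree w = 1) with hA1
  set A2 := univ.filter (fun w => T.degree w = 2) with hA2
  set A3 := univ.filter (fun w => 3 ≤ T.degree w) with hA3
  set S := univ.filter (fun w => T.degree w ≠ 2) with hSdef
  set C := univ.filter (fun w => T.degree w = 2 ∧ 3 ≤ (G.neighborSet w).ncard) with hC
  -- partition of univ
  have hpart : A1.card + A2.card + A3.card = n := by
    have e1 := card_filter_add_card_filter_not
      (s := (univ : Finset V)) (p := fun w => T.degree w = 1)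
    have e2 := card_filter_add_card_filter_not
      (s := univ.filter (fun w => ¬(T.degree w = 1))) (p := fun w => T.degree w = 2)
    have h21 : (univ.filter (fun w => ¬(T.degree w = 1))).filter (fun w => T.degree w = 2)
        = A2 := by
      ext w; simp only [mem_filter, mem_univ, true_and, hA2]; omega
    have h22 : (univ.filter (fun w => ¬(T.degree w = 1))).filter (fun w => ¬(T.degree w = 2))
        = A3 := by
      ext w
      simp only [mem_filter, mem_univ, true_and, hA3]
      have := hd1 w
      omega
    rw [h21, h22] at e2
    rw [Finset.card_univ, ← hn, ← hA1] at e1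
    omega
  -- sum of degrees
  have hsum : ∑ w, T.degree w = 2 * (n - 1) := by
    rw [T.sum_degrees_eq_twice_card_edges]
    have := htree.card_edgeFinset
    omega
  have hsplit1 : ∑ w ∈ A1, T.degree w = A1.card := by
    rw [Finset.sum_congr rfl (fun x hx => (mem_filter.1 hx).2), Finset.sum_const, smul_eq_mul,
      mul_one]
  have hsplit2 : ∑ w ∈ A2, T.degree w = 2 * A2.card := by
    rw [Finset.sum_congr rfl (fun x hx => (mem_filter.1 hx).2), Finset.sum_const, smul_eq_mul,
      mul_comm]
  have hsumsplit : ∑ w, T.degree w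
      = A1.card + 2 * A2.card + ∑ w ∈ A3, T.degree w := by
    have e1 := Finset.sum_filter_add_sum_filter_not univ (fun w => T.degree w = 1)
      (fun w => T.degree w)
    have e2 := Finset.sum_filter_add_sum_filter_not
      (univ.filter (fun w => ¬(T.degree w = 1))) (fun w => T.degree w = 2)
      (fun w => T.degree w)
    have h21 : (univ.filter (fun w => ¬(T.degree w = 1))).filter (fun w => T.degree w = 2)
        = A2 := by
      ext w; simp only [mem_filter, mem_univ, true_and, hA2]; omega
    have h22 : (univ.filter (fun w => ¬(T.degree w = 1))).filter (fun w => ¬(T.degree w = 2))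
        = A3 := by
      ext w
      simp only [mem_filter, mem_univ, true_and, hA3]
      have := hd1 w
      omega
    rw [h21, h22] at e2
    rw [← e1, ← e2, hsplit1, hsplit2]
    ring
  have hsum3lb : 3 * A3.card ≤ ∑ w ∈ A3, T.degree w := by
    calc 3 * A3.card = ∑ _w ∈ A3, 3 := by rw [Finset.sum_const, smul_eq_mul, mul_comm]
      _ ≤ ∑ w ∈ A3, T.degree w :=
        Finset.sum_le_sum (fun w hw => (mem_filter.1 hw).2)
  have hsumS : ∑ w ∈ S, T.degree w = A1.card + ∑ w ∈ A3, T.degree w := by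
    have e2 := Finset.sum_filter_add_sum_filter_not S (fun w => T.degree w = 1)
      (fun w => T.degree w)
    have h21 : S.filter (fun w => T.degree w = 1) = A1 := by
      ext w; simp only [hSdef, mem_filter, mem_univ, true_and, hA1]; omega
    have h22 : S.filter (fun w => ¬(T.degree w = 1)) = A3 := by
      ext w
      simp only [hSdef, mem_filter, mem_univ, true_and, hA3]
      have := hd1 w
      omega
    rw [h21, h22] at e2
    rw [← e2, hsplit1]
  -- the ball around special vertices
  set ballF : V → Finset V := fun s => T.neighborFinset s ∪
    (T.neighborFinset s).biUnion
      (fun y => if T.degree y = 2 then T.neighborFinset y \ {s} else ∅) with hballF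
  have hCsub : C ⊆ S.biUnion ballF := by
    intro w hw
    obtain ⟨-, hdw, hGw⟩ := mem_filter.1 hw
    · -- find a non-tree edge at w
      have hex : ∃ u, G.Adj w u ∧ ¬T.Adj w u := by
        by_contra hcon
        push_neg at hcon
        have hsub : G.neighborSet w ⊆ T.neighborSet w := by
          intro x hx
          exact hcon x hx
        have := Set.ncard_le_ncard hsub (Set.toFinite _)
        rw [hdd w, hdw] at this
        omega
      obtain ⟨u, hGu, hTu⟩ := hex
      obtain ⟨s, hs2, hcase⟩ := claimA hTG htree hmax hGu hTu (by rw [hdd w, hdw])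
      rw [hdd s] at hs2
      rw [mem_biUnion]
      refine ⟨s, by simp [hSdef, hs2], ?_⟩
      rcases hcase with hadj | ⟨x, hx2, hwx, hxs⟩
      · rw [mem_union]
        exact Or.inl ((mem_neighborFinset _ _ _).2 hadj.symm)
      · rw [mem_union, mem_biUnion]
        refine Or.inr ⟨x, (mem_neighborFinset _ _ _).2 hxs.symm, ?_⟩
        rw [hdd x] at hx2
        rw [if_pos hx2, mem_sdiff, mem_singleton]
        refine ⟨(mem_neighborFinset _ _ _).2 hwx.symm, ?_⟩
        rintro rfl
        exact hs2 hdw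
  -- cardinality of the balls
  have hball : ∀ s, (ballF s).card ≤ 2 * T.degree s := by
    intro s
    refine le_trans (card_union_le _ _) ?_
    have h1 : (T.neighborFinset s).card = T.degree s := T.card_neighborFinset_eq_degree s
    have h2' : ((T.neighborFinset s).biUnion
        (fun y => if T.degree y = 2 then T.neighborFinset y \ {s} else ∅)).card
        ≤ T.degree s := by
      refine le_trans (card_biUnion_le) ?_
      rw [← h1]
      calc ∑ y ∈ T.neighborFinset s,
            (if T.degree y = 2 then T.neighborFinset y \ {s} else ∅).card
          ≤ ∑ _y ∈ T.neighborFinset s, 1 := by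
            refine Finset.sum_le_sum (fun y hy => ?_)
            by_cases hy2 : T.degree y = 2
            · rw [if_pos hy2]
              have hsy : s ∈ T.neighborFinset y :=
                (mem_neighborFinset _ _ _).2 ((mem_neighborFinset _ _ _).1 hy).symm
              rw [card_sdiff_of_subset (by simpa using hsy), card_singleton,
                T.card_neighborFinset_eq_degree y, hy2]
            · rw [if_neg hy2]
              simp
        _ = (T.neighborFinset s).card := by rw [Finset.sum_const, smul_eq_mul, mul_one]
    omega
  have hCcard : C.card ≤ 2 * (A1.card + ∑ w ∈ A3, T.degree w) := by
    calc C.card ≤ (S.biUnion ballF).card := card_le_card hCsub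
      _ ≤ ∑ s ∈ S, (ballF s).card := card_biUnion_le
      _ ≤ ∑ s ∈ S, 2 * T.degree s := Finset.sum_le_sum (fun s _ => hball s)
      _ = 2 * ∑ s ∈ S, T.degree s := by rw [Finset.mul_sum]
      _ = 2 * (A1.card + ∑ w ∈ A3, T.degree w) := by rw [hsumS]
  -- the high-degree vertices of G
  have hBG : {v | 3 ≤ (G.neighborSet v).ncard}.ncard
      = (univ.filter (fun w => 3 ≤ (G.neighborSet w).ncard)).card := by
    rw [Set.ncard_eq_toFinset_card', Set.toFinset_setOf]
  have hBGsub : univ.filter (fun w => 3 ≤ (G.neighborSet w).ncard) ⊆ A1 ∪ A3 ∪ C := by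
    intro w hw
    have hGw : 3 ≤ (G.neighborSet w).ncard := (mem_filter.1 hw).2
    rw [mem_union, mem_union]
    have := hd1 w
    rcases Nat.lt_or_ge (T.degree w) 2 with hlt | hge
    · exact Or.inl (Or.inl (by simp only [hA1, mem_filter, mem_univ, true_and]; omega))
    · rcases Nat.lt_or_ge (T.degree w) 3 with hlt' | hge'
      · refine Or.inr (by simp only [hC, mem_filter, mem_univ, true_and]; exact ⟨by omega, hGw⟩)
      · exact Or.inl (Or.inr (by simp only [hA3, mem_filter, mem_univ, true_and]; omega))
  have hBGcard : {v | 3 ≤ (G.neighborSet v).ncard}.ncard ≤ A1.card + A3.card + C.card := by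
    rw [hBG]
    refine le_trans (card_le_card hBGsub) ?_
    refine le_trans (card_union_le _ _) ?_
    have := card_union_le A1 A3
    omega
  -- numLeaves T = A1.card
  have hnl : numLeaves T = A1.card := by
    rw [numLeaves, Set.ncard_eq_toFinset_card', Set.toFinset_setOf]
    congr 1
    ext w
    simp only [mem_filter, mem_univ, true_and, hA1, hdd w]
  rw [hnl]
  have h5 := hsum3lb
  omega

end Main2

end MLAux

open MLAux in
/-- In a finite connected graph with at least two vertices, the number of vertices of degree
at least 3 is at most `12 · ml(G) + 32`. -/
theorem card_highDegree_le_ml [Fintype V] (G : SimpleGraph V) (hG : G.Connected)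
    (h2 : 1 < Fintype.card V) :
    {v | 3 ≤ (G.neighborSet v).ncard}.ncard ≤ 12 * ml G + 32 := by
  classical
  obtain ⟨T0, hT0G, hT0⟩ := exists_spanning_tree G hG
  set Sml := {n | ∃ T : SimpleGraph V, T ≤ G ∧ T.IsTree ∧ n = numLeaves T} with hSml
  have hne : Sml.Nonempty := ⟨numLeaves T0, T0, hT0G, hT0, rfl⟩
  have hbdd : BddAbove Sml := by
    refine ⟨Fintype.card V, fun m hm => ?_⟩
    obtain ⟨T, -, -, rfl⟩ := hm
    calc numLeaves T ≤ (Set.univ : Set V).ncard :=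
          Set.ncard_le_ncard (Set.subset_univ _) (Set.toFinite _)
      _ = Fintype.card V := by rw [Set.ncard_univ, Nat.card_eq_fintype_card]
  obtain ⟨T, hTG, htree, hml⟩ := Nat.sSup_mem hne hbdd
  have hmax : ∀ T' : SimpleGraph V, T' ≤ G → T'.IsTree → numLeaves T' ≤ numLeaves T := by
    intro T' h1 h1t
    rw [← hml]
    exact le_csSup hbdd ⟨T', h1, h1t, rfl⟩
  have hres := main_count hTG htree hmax h2
  have hmleq : ml G = numLeaves T := by
    rw [ml, ← hSml, hml]
  rw [hmleq]
  exact hres
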